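/- Fix N ∈ ℕ, functions Λ : ℝ^N → Fin N → Fin N → ℝ with Λ^{ij}(x) = −Λ^{ji}(x) for all i, j, x, and E : ℝ^N → Fin N → ℝ. For a function f : ℝ^N → ℝ let ι_f : ℝ^N × ℝ → ℝ be defined by ι_f(x,s) = s·f(x). Then for all differentiable f, g : ℝ^N → ℝ and all (x,s) with s ≠ 0, {ι_f, ι_g}_Π(x,s) = s·{f,g}_J(x); that is, ι_{{f,g}_J} = {ι_f, ι_g}_Π on ℝ^N × (ℝ ∖ {0}). (The Poissonization bracket of the degree-1 homogeneous functions representing two sections equals the degree-1 homogeneous function representing their Jacobi bracket.) -/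

import Mathlib

open Finset

/-- The `i`-th partial derivative of a function `f : ℝ^N → ℝ`. -/
noncomputable def pd {N : ℕ} (f : (Fin N → ℝ) → ℝ) (x : Fin N → ℝ) (i : Fin N) : ℝ :=
  fderiv ℝ f x (Pi.single i 1)

/-- The partial derivative of `F : ℝ^N × ℝ → ℝ` in the `i`-th base direction `x^i`. -/
noncomputable def pdx {N : ℕ} (F : (Fin N → ℝ) × ℝ → ℝ) (p : (Fin N → ℝ) × ℝ)
    (i : Fin N) : ℝ :=
  fderiv ℝ F p (Pi.single i 1, 0)

/-- The partial derivative of `F : ℝ^N × ℝ → ℝ` in the fiber direction `s`. -/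
noncomputable def pds {N : ℕ} (F : (Fin N → ℝ) × ℝ → ℝ) (p : (Fin N → ℝ) × ℝ) : ℝ :=
  fderiv ℝ F p (0, 1)

/-- The Jacobi bracket on `ℝ^N` attached to the pair `(Λ, E)`:
`{f,g}_J = Λ^{ij} ∂_i f ∂_j g + f E^i ∂_i g − g E^i ∂_i f`. -/
noncomputable def jacobiBracket {N : ℕ} (Λ : (Fin N → ℝ) → Fin N → Fin N → ℝ)
    (E : (Fin N → ℝ) → Fin N → ℝ) (f g : (Fin N → ℝ) → ℝ) (x : Fin N → ℝ) : ℝ :=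
  (∑ i, ∑ j, Λ x i j * pd f x i * pd g x j)
    + f x * (∑ i, E x i * pd g x i) - g x * (∑ i, E x i * pd f x i)

/-- The Poissonization bracket on `ℝ^N × (ℝ ∖ {0})`:
`{F,G}_Π = s⁻¹ Λ^{ij} ∂_{x^i}F ∂_{x^j}G + E^i (∂_s F ∂_{x^i}G − ∂_{x^i}F ∂_s G)`. -/
noncomputable def poissonizationBracket {N : ℕ} (Λ : (Fin N → ℝ) → Fin N → Fin N → ℝ)
    (E : (Fin N → ℝ) → Fin N → ℝ) (F G : (Fin N → ℝ) × ℝ → ℝ)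
    (p : (Fin N → ℝ) × ℝ) : ℝ :=
  (p.2)⁻¹ * (∑ i, ∑ j, Λ p.1 i j * pdx F p i * pdx G p j)
    + ∑ i, E p.1 i * (pds F p * pdx G p i - pdx F p i * pds G p)

/-- The degree-1 homogeneous function on `ℝ^N × ℝ^×` representing a section `f`. -/
def iotaSec {N : ℕ} (f : (Fin N → ℝ) → ℝ) (p : (Fin N → ℝ) × ℝ) : ℝ :=
  p.2 * f p.1

lemma iota_deriv {N : ℕ} (f : (Fin N → ℝ) → ℝ) (hf : Differentiable ℝ f)
    (p : (Fin N → ℝ) × ℝ) :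
    HasFDerivAt (iotaSec f)
      (p.2 • ((fderiv ℝ f p.1).comp (ContinuousLinearMap.fst ℝ (Fin N → ℝ) ℝ))
        + f p.1 • (ContinuousLinearMap.snd ℝ (Fin N → ℝ) ℝ)) p := by
  have h1 : HasFDerivAt (fun q : (Fin N → ℝ) × ℝ => q.2)
      (ContinuousLinearMap.snd ℝ (Fin N → ℝ) ℝ) p := hasFDerivAt_snd
  have h2 : HasFDerivAt (fun q : (Fin N → ℝ) × ℝ => f q.1)
      ((fderiv ℝ f p.1).comp (ContinuousLinearMap.fst ℝ (Fin N → ℝ) ℝ)) p :=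
    ((hf p.1).hasFDerivAt).comp p hasFDerivAt_fst
  exact h1.mul h2

lemma pdx_iota {N : ℕ} (f : (Fin N → ℝ) → ℝ) (hf : Differentiable ℝ f)
    (p : (Fin N → ℝ) × ℝ) (i : Fin N) :
    pdx (iotaSec f) p i = p.2 * pd f p.1 i := by
  rw [pdx, (iota_deriv f hf p).fderiv]
  simp [pd]

lemma pds_iota {N : ℕ} (f : (Fin N → ℝ) → ℝ) (hf : Differentiable ℝ f)
    (p : (Fin N → ℝ) × ℝ) :
    pds (iotaSec f) p = f p.1 := by
  rw [pds, (iota_deriv f hf p).fderiv]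
  simp

theorem poissonization_of_jacobi_bracket {N : ℕ}
    (Λ : (Fin N → ℝ) → Fin N → Fin N → ℝ)
    (hΛ : ∀ (x : Fin N → ℝ) (i j : Fin N), Λ x i j = - Λ x j i)
    (E : (Fin N → ℝ) → Fin N → ℝ)
    (f g : (Fin N → ℝ) → ℝ) (hf : Differentiable ℝ f) (hg : Differentiable ℝ g) :
    ∀ (x : Fin N → ℝ) (s : ℝ), s ≠ 0 →
      poissonizationBracket Λ E (iotaSec f) (iotaSec g) (x, s) =
        s * jacobiBracket Λ E f g x := by
  intro x s hs
  simp only [poissonizationBracket, jacobiBracket, pdx_iota f hf, pdx_iota g hg,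
    pds_iota f hf, pds_iota g hg]
  have key1 : (∑ i, ∑ j, Λ x i j * ((x, s).2 * pd f x i) * ((x, s).2 * pd g x j))
      = s * s * (∑ i, ∑ j, Λ x i j * pd f x i * pd g x j) := by
    simp only [Finset.mul_sum]
    exact Finset.sum_congr rfl fun i _ => Finset.sum_congr rfl fun j _ => by ring
  have key2 : (∑ i, E x i * (f x * ((x, s).2 * pd g x i) - (x, s).2 * pd f x i * g x))
      = s * (f x * (∑ i, E x i * pd g x i) - g x * (∑ i, E x i * pd f x i)) := by
    simp only [mul_sub, Finset.mul_sum, Finset.sum_sub_distrib]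
    congr 1 <;> exact Finset.sum_congr rfl fun i _ => by ring
  simp only [key1, key2]
  field_simp
  ring
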